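/- For all K, P, Q, J ∈ M₂(ℂ), the adjugate of the 4×4 block matrix Φ := fromBlocks K P Q J is adj(Φ) = fromBlocks ( det J · adj K − adj Q · J · adj P ) ( det P · adj Q − adj K · P · adj J ) ( det Q · adj P − adj J · Q · adj K ) ( det K · adj J − adj P · K · adj Q ). In particular, if Φ is invertible then (det Φ) · Φ⁻¹ equals this block matrix. -/

import Mathlib

open Matrix

/-- The space of 2×2 complex matrices. -/
abbrev M2 : Type := Matrix (Fin 2) (Fin 2) ℂ

/-- Reindexing equivalence between `Fin 4` and `Fin 2 ⊕ Fin 2`. -/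
def e4 : Fin 4 ≃ Fin 2 ⊕ Fin 2 := (finSumFinEquiv (m := 2) (n := 2)).symm

set_option maxHeartbeats 1000000 in
/-- Explicit cofactor formula for the adjugate of a 4×4 complex matrix. -/
theorem adj4 (A : Matrix (Fin 4) (Fin 4) ℂ) :
    A.adjugate =
  !![(A 1 1 * A 2 2 * A 3 3 - A 1 1 * A 2 3 * A 3 2 - A 1 2 * A 2 1 * A 3 3 + A 1 2 * A 2 3 * A 3 1 + A 1 3 * A 2 1 * A 3 2 - A 1 3 * A 2 2 * A 3 1),
      -(A 0 1 * A 2 2 * A 3 3 - A 0 1 * A 2 3 * A 3 2 - A 0 2 * A 2 1 * A 3 3 + A 0 2 * A 2 3 * A 3 1 + A 0 3 * A 2 1 * A 3 2 - A 0 3 * A 2 2 * A 3 1),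
      (A 0 1 * A 1 2 * A 3 3 - A 0 1 * A 1 3 * A 3 2 - A 0 2 * A 1 1 * A 3 3 + A 0 2 * A 1 3 * A 3 1 + A 0 3 * A 1 1 * A 3 2 - A 0 3 * A 1 2 * A 3 1),
      -(A 0 1 * A 1 2 * A 2 3 - A 0 1 * A 1 3 * A 2 2 - A 0 2 * A 1 1 * A 2 3 + A 0 2 * A 1 3 * A 2 1 + A 0 3 * A 1 1 * A 2 2 - A 0 3 * A 1 2 * A 2 1);
      -(A 1 0 * A 2 2 * A 3 3 - A 1 0 * A 2 3 * A 3 2 - A 1 2 * A 2 0 * A 3 3 + A 1 2 * A 2 3 * A 3 0 + A 1 3 * A 2 0 * A 3 2 - A 1 3 * A 2 2 * A 3 0),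
      (A 0 0 * A 2 2 * A 3 3 - A 0 0 * A 2 3 * A 3 2 - A 0 2 * A 2 0 * A 3 3 + A 0 2 * A 2 3 * A 3 0 + A 0 3 * A 2 0 * A 3 2 - A 0 3 * A 2 2 * A 3 0),
      -(A 0 0 * A 1 2 * A 3 3 - A 0 0 * A 1 3 * A 3 2 - A 0 2 * A 1 0 * A 3 3 + A 0 2 * A 1 3 * A 3 0 + A 0 3 * A 1 0 * A 3 2 - A 0 3 * A 1 2 * A 3 0),
      (A 0 0 * A 1 2 * A 2 3 - A 0 0 * A 1 3 * A 2 2 - A 0 2 * A 1 0 * A 2 3 + A 0 2 * A 1 3 * A 2 0 + A 0 3 * A 1 0 * A 2 2 - A 0 3 * A 1 2 * A 2 0);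
      (A 1 0 * A 2 1 * A 3 3 - A 1 0 * A 2 3 * A 3 1 - A 1 1 * A 2 0 * A 3 3 + A 1 1 * A 2 3 * A 3 0 + A 1 3 * A 2 0 * A 3 1 - A 1 3 * A 2 1 * A 3 0),
      -(A 0 0 * A 2 1 * A 3 3 - A 0 0 * A 2 3 * A 3 1 - A 0 1 * A 2 0 * A 3 3 + A 0 1 * A 2 3 * A 3 0 + A 0 3 * A 2 0 * A 3 1 - A 0 3 * A 2 1 * A 3 0),
      (A 0 0 * A 1 1 * A 3 3 - A 0 0 * A 1 3 * A 3 1 - A 0 1 * A 1 0 * A 3 3 + A 0 1 * A 1 3 * A 3 0 + A 0 3 * A 1 0 * A 3 1 - A 0 3 * A 1 1 * A 3 0),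
      -(A 0 0 * A 1 1 * A 2 3 - A 0 0 * A 1 3 * A 2 1 - A 0 1 * A 1 0 * A 2 3 + A 0 1 * A 1 3 * A 2 0 + A 0 3 * A 1 0 * A 2 1 - A 0 3 * A 1 1 * A 2 0);
      -(A 1 0 * A 2 1 * A 3 2 - A 1 0 * A 2 2 * A 3 1 - A 1 1 * A 2 0 * A 3 2 + A 1 1 * A 2 2 * A 3 0 + A 1 2 * A 2 0 * A 3 1 - A 1 2 * A 2 1 * A 3 0),
      (A 0 0 * A 2 1 * A 3 2 - A 0 0 * A 2 2 * A 3 1 - A 0 1 * A 2 0 * A 3 2 + A 0 1 * A 2 2 * A 3 0 + A 0 2 * A 2 0 * A 3 1 - A 0 2 * A 2 1 * A 3 0),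
      -(A 0 0 * A 1 1 * A 3 2 - A 0 0 * A 1 2 * A 3 1 - A 0 1 * A 1 0 * A 3 2 + A 0 1 * A 1 2 * A 3 0 + A 0 2 * A 1 0 * A 3 1 - A 0 2 * A 1 1 * A 3 0),
      (A 0 0 * A 1 1 * A 2 2 - A 0 0 * A 1 2 * A 2 1 - A 0 1 * A 1 0 * A 2 2 + A 0 1 * A 1 2 * A 2 0 + A 0 2 * A 1 0 * A 2 1 - A 0 2 * A 1 1 * A 2 0)]
 := by
  ext i j
  fin_cases i <;> fin_cases j <;>
    (simp (config := { decide := true }) [adjugate_apply, det_succ_row_zero, Fin.sum_univ_succ,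
      Fin.succ_ne_zero, updateRow_apply, Pi.single_apply, Fin.succAbove,
      (by decide : (Fin.succ 2 : Fin 4) = 3), (by decide : Fin.castSucc (2 : Fin 3) = (2 : Fin 4))]
     <;> ring)

set_option maxHeartbeats 1000000 in
/-- Two-spinor block formula for the adjugate (and hence the inverse) of an endomorphism
`Φ = fromBlocks K P Q J` of 4-spinor space. If `Φ` is invertible then `(det Φ)·Φ⁻¹`
equals the same block matrix. -/
theorem adjugate_fromBlocks_two_spinor (K P Q J : M2) :
    (fromBlocks K P Q J).adjugate
      = fromBlocks
          (J.det • K.adjugate - Q.adjugate * J * P.adjugate)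
          (P.det • Q.adjugate - K.adjugate * P * J.adjugate)
          (Q.det • P.adjugate - J.adjugate * Q * K.adjugate)
          (K.det • J.adjugate - P.adjugate * K * Q.adjugate)
    ∧ (IsUnit (fromBlocks K P Q J).det →
        (fromBlocks K P Q J).det • (fromBlocks K P Q J)⁻¹
          = fromBlocks
              (J.det • K.adjugate - Q.adjugate * J * P.adjugate)
              (P.det • Q.adjugate - K.adjugate * P * J.adjugate)
              (Q.det • P.adjugate - J.adjugate * Q * K.adjugate)
              (K.det • J.adjugate - P.adjugate * K * Q.adjugate)) := by
  set Φ := fromBlocks K P Q J with hΦ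
  set R := fromBlocks
      (J.det • K.adjugate - Q.adjugate * J * P.adjugate)
      (P.det • Q.adjugate - K.adjugate * P * J.adjugate)
      (Q.det • P.adjugate - J.adjugate * Q * K.adjugate)
      (K.det • J.adjugate - P.adjugate * K * Q.adjugate) with hR
  have hblock : Φ.submatrix e4 e4
      = !![K 0 0, K 0 1, P 0 0, P 0 1;
           K 1 0, K 1 1, P 1 0, P 1 1;
           Q 0 0, Q 0 1, J 0 0, J 0 1;
           Q 1 0, Q 1 1, J 1 0, J 1 1] := by
    ext i j
    fin_cases i <;> fin_cases j <;> rfl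
  have hsub : ∀ A B C D : M2, (fromBlocks A B C D).submatrix e4 e4
      = !![A 0 0, A 0 1, B 0 0, B 0 1;
           A 1 0, A 1 1, B 1 0, B 1 1;
           C 0 0, C 0 1, D 0 0, D 0 1;
           C 1 0, C 1 1, D 1 0, D 1 1] := by
    intro A B C D
    ext i j
    fin_cases i <;> fin_cases j <;> rfl
  have key : (Φ.submatrix e4 e4).adjugate = R.submatrix e4 e4 := by
    rw [hblock, adj4, hR, hsub]
    ext i j
    fin_cases i <;> fin_cases j <;>
      (simp [adjugate_fin_two, det_fin_two, mul_apply, vecMul, dotProduct, Fin.sum_univ_succ,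
        Matrix.sub_apply, Matrix.smul_apply] <;> ring)
  have hadj : Φ.adjugate = R := by
    have h1 := (adjugate_submatrix_equiv_self e4 Φ).symm.trans key
    have h2 := congrArg (fun X => X.submatrix e4.symm e4.symm) h1
    simpa [Matrix.submatrix_submatrix, Equiv.self_comp_symm] using h2
  refine ⟨hadj, fun h => ?_⟩
  rw [Matrix.inv_def, smul_smul, Ring.mul_inverse_cancel _ h, one_smul, hadj]
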